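/- Let (Ω, F, μ) be a probability space, s : Ω → {0,1} measurable with μ({s = 1}) > 0, and ν = μ(· | {s = 1}) the conditional probability measure. Let w : Ω → ℝ^l be measurable, γ ∈ ℝ^l, and let z, ε₁ : Ω → ℝ be such that z, ε₁, z·ε₁, and z·M(⟨w, γ⟩) are ν-integrable. Assume: (i) E_ν[z | σ(w)] = G ∘ w ν-a.e. for a measurable G; (ii) E_ν[ε₁ | σ(w)] = M(⟨w, γ⟩) ν-a.e. for a measurable M; (iii) E_ν[z·ε₁ | σ(w)] = (G ∘ w)·M(⟨w, γ⟩) ν-a.e. Then the instrument is orthogonal to the bias-removed disturbance under truncation: E_ν[z·(ε₁ − M(⟨w, γ⟩))] = 0, and moreover Cov_ν(z, ε₁ − M(⟨w, γ⟩)) = 0. -/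

import Mathlib

open MeasureTheory ProbabilityTheory

/-- **Theorem 3 (Bias removal).** Under the truncated measure
`ν = μ(· | {s = 1})`, removing the contamination factor `M(⟨w,γ⟩)` from the
disturbance restores orthogonality of the instrument:
`E_ν[z·(ε₁ − M(⟨w,γ⟩))] = 0` and `Cov_ν(z, ε₁ − M(⟨w,γ⟩)) = 0`. -/
theorem iv_bias_removal
    {Ω : Type*} [MeasurableSpace Ω] (μ : Measure Ω) [IsProbabilityMeasure μ]
    (s : Ω → ℝ) (hs : Measurable s) (hs01 : ∀ ω, s ω = 0 ∨ s ω = 1)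
    (hpos : 0 < μ {ω | s ω = 1})
    (ν : Measure Ω) (hν : ν = μ[|{ω | s ω = 1}])
    {l : ℕ} (w : Ω → EuclideanSpace ℝ (Fin l)) (hw : Measurable w)
    (γ : EuclideanSpace ℝ (Fin l)) (z ε₁ : Ω → ℝ)
    (hz : Integrable z ν) (hε₁ : Integrable ε₁ ν)
    (hzε₁ : Integrable (fun ω => z ω * ε₁ ω) ν)
    (G : EuclideanSpace ℝ (Fin l) → ℝ) (hG : Measurable G)
    (M : ℝ → ℝ) (hM : Measurable M)
    (hzM : Integrable (fun ω => z ω * M (inner ℝ (w ω) γ : ℝ)) ν)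
    (hi : ν[z | MeasurableSpace.comap w inferInstance]
            =ᵐ[ν] fun ω => G (w ω))
    (hii : ν[ε₁ | MeasurableSpace.comap w inferInstance]
            =ᵐ[ν] fun ω => M (inner ℝ (w ω) γ : ℝ))
    (hiii : ν[(fun ω => z ω * ε₁ ω) | MeasurableSpace.comap w inferInstance]
            =ᵐ[ν] fun ω => G (w ω) * M (inner ℝ (w ω) γ : ℝ)) :
    (∫ ω, z ω * (ε₁ ω - M (inner ℝ (w ω) γ : ℝ)) ∂ν) = 0
    ∧ (∫ ω, z ω * (ε₁ ω - M (inner ℝ (w ω) γ : ℝ)) ∂ν)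
        - (∫ ω, z ω ∂ν) * (∫ ω, (ε₁ ω - M (inner ℝ (w ω) γ : ℝ)) ∂ν) = 0 := by
  have hprob : IsProbabilityMeasure ν := by
    rw [hν]
    exact cond_isProbabilityMeasure hpos.ne'
  have hm : MeasurableSpace.comap w inferInstance ≤ (inferInstance : MeasurableSpace Ω) :=
    hw.comap_le
  have hwm : Measurable[MeasurableSpace.comap w inferInstance] w :=
    Measurable.of_comap_le le_rfl
  have hMm : StronglyMeasurable[MeasurableSpace.comap w inferInstance]
      (fun ω => M (inner ℝ (w ω) γ : ℝ)) := by
    refine Measurable.stronglyMeasurable ?_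
    exact hM.comp ((Continuous.measurable (continuous_id.inner continuous_const)).comp hwm)
  have hMint : Integrable (fun ω => M (inner ℝ (w ω) γ : ℝ)) ν :=
    (integrable_condExp).congr hii
  have h1 : (∫ ω, z ω * ε₁ ω ∂ν) = ∫ ω, G (w ω) * M (inner ℝ (w ω) γ : ℝ) ∂ν := by
    rw [← integral_condExp (μ := ν) (f := fun ω => z ω * ε₁ ω) hm]
    exact integral_congr_ae hiii
  have hcondzM : ν[(fun ω => z ω * M (inner ℝ (w ω) γ : ℝ)) | MeasurableSpace.comap w inferInstance]
      =ᵐ[ν] fun ω => M (inner ℝ (w ω) γ : ℝ) * (ν[z | MeasurableSpace.comap w inferInstance]) ω := by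
    have := condExp_mul_of_stronglyMeasurable_left hMm
      (by simpa [Pi.mul_def, mul_comm] using hzM) hz
    filter_upwards [this] with ω hω
    simpa [Pi.mul_def, mul_comm] using hω
  have h2 : (∫ ω, z ω * M (inner ℝ (w ω) γ : ℝ) ∂ν)
      = ∫ ω, G (w ω) * M (inner ℝ (w ω) γ : ℝ) ∂ν := by
    rw [← integral_condExp (μ := ν) (f := fun ω => z ω * M (inner ℝ (w ω) γ : ℝ)) hm]
    refine integral_congr_ae ?_
    filter_upwards [hcondzM, hi] with ω ha hb
    rw [ha, hb, mul_comm]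
  have h3 : (∫ ω, ε₁ ω ∂ν) = ∫ ω, M (inner ℝ (w ω) γ : ℝ) ∂ν := by
    rw [← integral_condExp (μ := ν) (f := ε₁) hm]
    exact integral_congr_ae hii
  have key : (∫ ω, z ω * (ε₁ ω - M (inner ℝ (w ω) γ : ℝ)) ∂ν) = 0 := by
    have heq : (fun ω => z ω * (ε₁ ω - M (inner ℝ (w ω) γ : ℝ)))
        = fun ω => z ω * ε₁ ω - z ω * M (inner ℝ (w ω) γ : ℝ) := by
      funext ω; ring
    rw [heq, integral_sub hzε₁ hzM, h1, h2, sub_self]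
  refine ⟨key, ?_⟩
  rw [key, integral_sub hε₁ hMint, h3, sub_self, mul_zero, sub_zero]
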